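/- Let d, m ≥ 1, let L > 0, and let F_1, …, F_m : EuclideanSpace ℝ (Fin d) → ℝ be differentiable functions whose gradients ∇F_i are each Lipschitz with constant L. Let F = (1/m) Σ_{i=1}^m F_i. Then for any points x_1, …, x_m with mean x̄ = (1/m) Σ_{i=1}^m x_i, writing h = (1/m) Σ_{i=1}^m ∇F_i(x_i), one has -⟪∇F(x̄), h⟫ ≤ -(1/2)‖∇F(x̄)‖² - (1/2)‖h‖² + (L²/(2m)) Σ_{i=1}^m ‖x̄ - x_i‖². -/

import Mathlib

open scoped RealInnerProductSpace

/-- The inner-product bound from the descent lemma (term (A)):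
`-⟪∇F(x̄), h⟫ ≤ -(1/2)‖∇F(x̄)‖² - (1/2)‖h‖² + (L²/(2m)) Σ‖x̄ - xᵢ‖²`
where `h = (1/m) Σ ∇Fᵢ(xᵢ)`. -/
theorem descent_inner_product_bound
    (d m : ℕ) (hd : 1 ≤ d) (hm : 1 ≤ m)
    (L : ℝ) (hL : 0 < L)
    (F : Fin m → EuclideanSpace ℝ (Fin d) → ℝ)
    (hdiff : ∀ i, Differentiable ℝ (F i))
    (hlip : ∀ i x y, ‖gradient (F i) x - gradient (F i) y‖ ≤ L * ‖x - y‖)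
    (Fbar : EuclideanSpace ℝ (Fin d) → ℝ)
    (hFbar : ∀ y, Fbar y = (1 / (m : ℝ)) * ∑ i, F i y)
    (x : Fin m → EuclideanSpace ℝ (Fin d))
    (xbar : EuclideanSpace ℝ (Fin d))
    (hxbar : xbar = (1 / (m : ℝ)) • ∑ i, x i)
    (h : EuclideanSpace ℝ (Fin d))
    (hh : h = (1 / (m : ℝ)) • ∑ i, gradient (F i) (x i)) :
    -⟪gradient Fbar xbar, h⟫ ≤
      -(1 / 2) * ‖gradient Fbar xbar‖ ^ 2 - (1 / 2) * ‖h‖ ^ 2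
        + (L ^ 2 / (2 * (m : ℝ))) * ∑ i, ‖xbar - x i‖ ^ 2 := by
  have hm0 : (0:ℝ) < (m:ℝ) := by exact_mod_cast hm
  -- gradient of Fbar at xbar
  have hgrad : gradient Fbar xbar = (1 / (m : ℝ)) • ∑ i, gradient (F i) xbar := by
    have hfd : HasFDerivAt Fbar
        ((1 / (m : ℝ)) • ∑ i, fderiv ℝ (F i) xbar) xbar := by
      have hsum : HasFDerivAt (fun y => ∑ i, F i y) (∑ i, fderiv ℝ (F i) xbar) xbar :=
        HasFDerivAt.fun_sum fun i _ => ((hdiff i) xbar).hasFDerivAt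
      have h2 := hsum.const_smul (1 / (m : ℝ))
      refine h2.congr_of_eventuallyEq ?_
      filter_upwards with y
      simp [hFbar y, smul_eq_mul]
    have hg := hfd.hasGradientAt
    rw [hg.gradient]
    simp only [map_smul, map_sum]
    rfl
  set g := gradient Fbar xbar with hg
  -- key identity
  have hid : -⟪g, h⟫ =
      -(1/2) * ‖g‖^2 - (1/2) * ‖h‖^2 + (1/2) * ‖g - h‖^2 := by
    have := norm_sub_sq_real g h
    nlinarith [this]
  rw [hid]
  have hdiffnorm : ‖g - h‖ ≤ (L / m) * ∑ i, ‖xbar - x i‖ := by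
    have : g - h = (1 / (m : ℝ)) • ∑ i, (gradient (F i) xbar - gradient (F i) (x i)) := by
      rw [hgrad, hh, ← smul_sub, Finset.sum_sub_distrib]
    rw [this, norm_smul]
    have h1 : ‖∑ i, (gradient (F i) xbar - gradient (F i) (x i))‖ ≤
        ∑ i, L * ‖xbar - x i‖ :=
      (norm_sum_le _ _).trans (Finset.sum_le_sum fun i _ => hlip i xbar (x i))
    have h2 : ‖(1 / (m:ℝ))‖ = 1 / (m:ℝ) := by
      rw [Real.norm_eq_abs, abs_of_pos (by positivity)]
    rw [h2]
    have h1' : ‖∑ i, (gradient (F i) xbar - gradient (F i) (x i))‖ ≤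
        L * ∑ i, ‖xbar - x i‖ := by rw [Finset.mul_sum]; exact h1
    calc (1/(m:ℝ)) * ‖∑ i, (gradient (F i) xbar - gradient (F i) (x i))‖
        ≤ (1/(m:ℝ)) * (L * ∑ i, ‖xbar - x i‖) :=
          mul_le_mul_of_nonneg_left h1' (by positivity)
      _ = (L / m) * ∑ i, ‖xbar - x i‖ := by ring
  have hsq : ‖g - h‖^2 ≤ (L^2 / m) * ∑ i, ‖xbar - x i‖^2 := by
    have h3 : ‖g - h‖^2 ≤ ((L / m) * ∑ i, ‖xbar - x i‖)^2 := by
      have hnn : (0:ℝ) ≤ ‖g - h‖ := norm_nonneg _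
      nlinarith [hdiffnorm]
    have h4 : (∑ i, ‖xbar - x i‖)^2 ≤ (m:ℝ) * ∑ i, ‖xbar - x i‖^2 := by
      have := sq_sum_le_card_mul_sum_sq (s := Finset.univ) (f := fun i => ‖xbar - x i‖)
      simpa using this
    calc ‖g - h‖^2 ≤ (L/m)^2 * (∑ i, ‖xbar - x i‖)^2 := by rw [← mul_pow]; exact h3
      _ ≤ (L/m)^2 * ((m:ℝ) * ∑ i, ‖xbar - x i‖^2) :=
          mul_le_mul_of_nonneg_left h4 (by positivity)
      _ = (L^2 / m) * ∑ i, ‖xbar - x i‖^2 := by field_simp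
  have hkey : (L ^ 2 / (2 * (m : ℝ))) * ∑ i, ‖xbar - x i‖ ^ 2
      = (1/2) * ((L^2 / m) * ∑ i, ‖xbar - x i‖^2) := by
    field_simp
  rw [hkey]
  linarith [hsq]
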